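/- For every integer θ ≥ 3, there exists a labeling f of the cycle C_θ with M(f) = M(C_θ) such that the vertex labeled 1 and the vertex labeled θ are adjacent in C_θ. -/

import Mathlib

open Finset
open Fin.NatCast Fin.CommRing

/-- The product-sum M(f) of a vertex labeling: the sum of `f u * f v` over all edges
`{u,v}` of `G`, each edge counted exactly once. -/
noncomputable def prodSum {V : Type*} [Fintype V] (G : SimpleGraph V) (f : V → ℕ) : ℕ := by
  classical
  exact ∑ e ∈ G.edgeFinset, Sym2.lift ⟨fun u v => f u * f v, fun u v => Nat.mul_comm _ _⟩ e

/-- A labeling of a graph on `V`: a bijection from the vertices onto `{1,…,|V|}`. -/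
def IsLabeling (V : Type*) [Fintype V] (f : V → ℕ) : Prop :=
  Set.BijOn f Set.univ (Set.Icc 1 (Fintype.card V))

/-- MinPS of `G`: the minimum of `M(f)` over all labelings `f`. -/
noncomputable def minPS {V : Type*} [Fintype V] (G : SimpleGraph V) : ℕ :=
  sInf { m | ∃ f : V → ℕ, IsLabeling V f ∧ prodSum G f = m }

lemma cyc_adj_iff (n : ℕ) [NeZero n] (hn : 3 ≤ n) (u v : Fin n) :
    (SimpleGraph.cycleGraph n).Adj u v ↔ u = v + 1 ∨ v = u + 1 := by
  have h1 : (1 : Fin n).val = 1 := by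
    simp [Fin.val_one', Nat.mod_eq_of_lt (by omega : 1 < n)]
  rw [SimpleGraph.cycleGraph_adj']
  constructor
  · rintro (h | h)
    · left; have h2 : u - v = 1 := Fin.ext (by rw [h1, h])
      rw [← h2]; ring
    · right; have h2 : v - u = 1 := Fin.ext (by rw [h1, h])
      rw [← h2]; ring
  · rintro (rfl | rfl)
    · left; rw [add_sub_cancel_left, h1]
    · right; rw [add_sub_cancel_left, h1]

lemma cyc_edgeFinset (n : ℕ) [NeZero n] (hn : 3 ≤ n)
    {inst : Fintype (SimpleGraph.cycleGraph n).edgeSet} :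
    @SimpleGraph.edgeFinset (Fin n) (SimpleGraph.cycleGraph n) inst
      = Finset.univ.image (fun i : Fin n => s(i, i + 1)) := by
  ext e
  refine e.ind (fun u v => ?_)
  simp only [SimpleGraph.mem_edgeFinset, SimpleGraph.mem_edgeSet, Finset.mem_image,
    Finset.mem_univ, true_and, cyc_adj_iff n hn]
  constructor
  · rintro (h | h)
    · exact ⟨v, by rw [Sym2.eq_swap, h]⟩
    · exact ⟨u, by rw [h]⟩
  · rintro ⟨i, hi⟩
    rw [Sym2.eq_iff] at hi
    rcases hi with ⟨rfl, rfl⟩ | ⟨ha, hb⟩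
    · right; rfl
    · left; rw [← ha, hb]

lemma two_ne_zero_fin (n : ℕ) [NeZero n] (hn : 3 ≤ n) : (2 : Fin n) ≠ 0 := by
  have h : (2 : Fin n).val = 2 := by
    rw [show (2:Fin n) = ((2:ℕ):Fin n) by norm_cast, Fin.val_natCast]
    exact Nat.mod_eq_of_lt (by omega)
  intro hh; rw [hh] at h; simp at h

lemma cyc_prodSum (n : ℕ) [NeZero n] (hn : 3 ≤ n) (f : Fin n → ℕ) :
    prodSum (SimpleGraph.cycleGraph n) f = ∑ i : Fin n, f i * f (i + 1) := by
  classical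
  rw [prodSum, cyc_edgeFinset n hn, Finset.sum_image ?_]
  · simp
  · intro a _ b _ hab
    rw [Sym2.eq_iff] at hab
    rcases hab with ⟨h, _⟩ | ⟨ha, hb⟩
    · exact h
    · exfalso
      apply two_ne_zero_fin n hn
      have h3 : b + 2 = b + 0 := by
        rw [add_zero]
        calc b + 2 = a + 1 := by rw [ha]; ring
        _ = b := hb
      exact add_left_cancel h3

lemma finsum_eq (n : ℕ) [NeZero n] (F : Fin n → ℕ) :
    ∑ i : Fin n, F i * F (i + 1)
      = ∑ j ∈ range n, F ((j : ℕ) : Fin n) * F ((j + 1 : ℕ) : Fin n) := by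
  rw [← Fin.sum_univ_eq_sum_range (fun j => F ((j : ℕ) : Fin n) * F ((j + 1 : ℕ) : Fin n)) n]
  refine Finset.sum_congr rfl fun i _ => ?_
  have h1 : ((i.val : ℕ) : Fin n) = i := Fin.cast_val_eq_self i
  have h2 : ((i.val + 1 : ℕ) : Fin n) = i + 1 := by push_cast [h1]; rfl
  rw [h1, h2]

lemma sum_reverse_lt (n K : ℕ) (hK : 2 ≤ K) (hK2 : K + 2 ≤ n) (a b : ℕ → ℕ)
    (hb : ∀ j ≤ n, b j = if 1 ≤ j ∧ j ≤ K then a (K + 1 - j) else a j)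
    (h0 : a 0 = 1) (hKn : a K = n) (ha1 : a 1 < n) (haK1 : 2 ≤ a (K + 1)) :
    ∑ j ∈ range n, b j * b (j + 1) < ∑ j ∈ range n, a j * a (j + 1) := by
  have split : ∀ T : ℕ → ℕ, ∑ j ∈ range n, T j
      = T 0 + ((∑ j ∈ Ico 1 K, T j) + (T K + ∑ j ∈ Ico (K + 1) n, T j)) := by
    intro T
    rw [range_eq_Ico, ← Finset.sum_Ico_consecutive _ (by omega : (0:ℕ) ≤ 1) (by omega : 1 ≤ n),
      ← Finset.sum_Ico_consecutive _ (by omega : (1:ℕ) ≤ K) (by omega : K ≤ n),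
      ← Finset.sum_Ico_consecutive _ (by omega : K ≤ K + 1) (by omega : K + 1 ≤ n),
      Nat.Ico_succ_singleton, Finset.sum_singleton, Nat.Ico_succ_singleton,
      Finset.sum_singleton]
  rw [split, split]
  -- middle sums agree
  have hmid : ∑ j ∈ Ico 1 K, b j * b (j + 1) = ∑ j ∈ Ico 1 K, a j * a (j + 1) := by
    have step : ∀ j ∈ Ico 1 K, b j * b (j + 1) = a (K + 1 - j) * a (K - j) := by
      intro j hj
      rw [Finset.mem_Ico] at hj
      rw [hb j (by omega), hb (j + 1) (by omega), if_pos ⟨by omega, by omega⟩,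
        if_pos ⟨by omega, by omega⟩]
      congr 2
      omega
    rw [Finset.sum_congr rfl step]
    refine Finset.sum_nbij' (fun j => K - j) (fun j => K - j) ?_ ?_ ?_ ?_ ?_
    · intro j hj; simp only [Finset.mem_Ico] at hj ⊢; omega
    · intro j hj; simp only [Finset.mem_Ico] at hj ⊢; omega
    · intro j hj; rw [Finset.mem_Ico] at hj; show K - (K - j) = j; omega
    · intro j hj; rw [Finset.mem_Ico] at hj; show K - (K - j) = j; omega
    · intro j hj; rw [Finset.mem_Ico] at hj
      show a (K + 1 - j) * a (K - j) = a (K - j) * a (K - j + 1)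
      rw [show K + 1 - j = K - j + 1 from by omega, Nat.mul_comm]
  -- tail sums agree
  have htail : ∑ j ∈ Ico (K + 1) n, b j * b (j + 1) = ∑ j ∈ Ico (K + 1) n, a j * a (j + 1) := by
    refine Finset.sum_congr rfl fun j hj => ?_
    rw [Finset.mem_Ico] at hj
    rw [hb j (by omega), hb (j + 1) (by omega), if_neg (by omega), if_neg (by omega)]
  -- endpoint terms
  have e0 : b 0 * b (0 + 1) = n := by
    rw [hb 0 (by omega), hb 1 (by omega), if_neg (by omega), if_pos ⟨le_refl 1, by omega⟩,
      show K + 1 - 1 = K from by omega, h0, hKn, Nat.one_mul]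
  have eK : b K * b (K + 1) = a 1 * a (K + 1) := by
    rw [hb K (by omega), hb (K + 1) (by omega), if_pos ⟨by omega, le_refl K⟩, if_neg (by omega),
      show K + 1 - K = 1 from by omega]
  have oldK : a K * a (K + 1) = n * a (K + 1) := by rw [hKn]
  have old0 : a 0 * a (0 + 1) = a 1 := by rw [h0, Nat.one_mul]
  rw [hmid, htail, e0, eK, oldK, old0]
  have key : n + a 1 * a (K + 1) < a 1 + n * a (K + 1) := by nlinarith
  omega

lemma IsLabeling.comp_bij {V : Type*} [Fintype V] {f : V → ℕ} (hf : IsLabeling V f)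
    {σ : V → V} (hσ : Function.Bijective σ) : IsLabeling V (f ∘ σ) := by
  refine ⟨fun x _ => hf.mapsTo (Set.mem_univ _), ?_, ?_⟩
  · exact fun x _ y _ h => hσ.injective (hf.injOn (Set.mem_univ _) (Set.mem_univ _) h)
  · intro y hy
    obtain ⟨x, -, rfl⟩ := hf.surjOn hy
    obtain ⟨z, rfl⟩ := hσ.surjective x
    exact ⟨z, Set.mem_univ _, rfl⟩

lemma labeling_injOn {V : Type*} [Fintype V] {f : V → ℕ} (hf : IsLabeling V f)
    {x y : V} (h : f x = f y) : x = y := hf.injOn (Set.mem_univ _) (Set.mem_univ _) h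

lemma improve (n : ℕ) [NeZero n] (hn : 3 ≤ n) (f : Fin n → ℕ) (hf : IsLabeling (Fin n) f)
    (u v : Fin n) (hu : f u = 1) (hv : f v = n)
    (hadj : ¬ (SimpleGraph.cycleGraph n).Adj u v) :
    ∃ h : Fin n → ℕ, IsLabeling (Fin n) h ∧
      prodSum (SimpleGraph.cycleGraph n) h < prodSum (SimpleGraph.cycleGraph n) f := by
  have hv1 : (1 : Fin n).val = 1 := by
    simp [Fin.val_one', Nat.mod_eq_of_lt (by omega : 1 < n)]
  set g : Fin n → ℕ := fun i => f (i + u) with hgdef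
  have hg : IsLabeling (Fin n) g := hf.comp_bij (Equiv.addRight u).bijective
  have hgf : prodSum (SimpleGraph.cycleGraph n) g = prodSum (SimpleGraph.cycleGraph n) f := by
    rw [cyc_prodSum n hn g, cyc_prodSum n hn f]
    refine Fintype.sum_equiv (Equiv.addRight u) _ _ fun i => ?_
    simp only [hgdef, Equiv.coe_addRight]
    rw [add_right_comm]
  set k : Fin n := v - u with hkdef
  have hkv : v = k + u := by rw [hkdef, sub_add_cancel]
  have hg0 : g 0 = 1 := by rw [hgdef]; simp [hu]
  have hgk : g k = n := by rw [hgdef]; simp only [← hkv]; exact hv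
  set K : ℕ := k.val with hKdef
  have hKlt : K < n := k.isLt
  have hkne0 : k ≠ 0 := by
    intro h0
    rw [h0, zero_add] at hkv
    rw [hkv, hu] at hv
    omega
  have hkne1 : k ≠ 1 := by
    intro h1
    apply hadj
    rw [cyc_adj_iff n hn]
    right
    rw [hkv, h1, add_comm]
  have hK0 : K ≠ 0 := by
    intro hh
    exact hkne0 (Fin.ext (by rw [Fin.val_zero]; exact hh))
  have hKn1 : K ≠ 1 := by
    intro hh
    exact hkne1 (Fin.ext (by rw [hv1]; exact hh))
  have hK1 : 2 ≤ K := by omega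
  have hKnn1 : K ≠ n - 1 := by
    intro hh
    have hk1 : k + 1 = 0 := by
      refine Fin.ext ?_
      rw [Fin.val_add, hv1, Fin.val_zero]
      have : K + 1 = n := by omega
      calc (K + 1) % n = n % n := by rw [this]
      _ = 0 := Nat.mod_self n
    have huv : u = v + 1 := by
      have : v + 1 = k + 1 + u := by rw [hkv, add_right_comm]
      rw [this, hk1, zero_add]
    exact hadj ((cyc_adj_iff n hn u v).mpr (Or.inl huv))
  have hK2 : K + 2 ≤ n := by omega
  set σ : Fin n → Fin n :=
    fun i => if h : 1 ≤ i.val ∧ i.val ≤ K then (⟨K + 1 - i.val, by omega⟩ : Fin n) else i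
    with hσdef
  have hσinv : Function.Involutive σ := by
    intro i
    by_cases hc : 1 ≤ i.val ∧ i.val ≤ K
    · rw [hσdef]
      simp only [dif_pos hc]
      have hc2 : 1 ≤ K + 1 - i.val ∧ K + 1 - i.val ≤ K := ⟨by omega, by omega⟩
      rw [dif_pos hc2]
      exact Fin.ext (by simp; omega)
    · rw [hσdef]; simp only [dif_neg hc, dif_neg hc]
  set h : Fin n → ℕ := fun i => g (σ i) with hhdef
  have hh : IsLabeling (Fin n) h := hg.comp_bij hσinv.bijective
  refine ⟨h, hh, ?_⟩
  rw [cyc_prodSum n hn h, ← hgf, cyc_prodSum n hn g, finsum_eq, finsum_eq]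
  set a : ℕ → ℕ := fun j => g ((j : ℕ) : Fin n) with hadef
  set b : ℕ → ℕ := fun j => h ((j : ℕ) : Fin n) with hbdef
  have hcast : ∀ (j : ℕ) (hj : j < n), ((j : ℕ) : Fin n) = ⟨j, hj⟩ :=
    fun j hj => Fin.ext (by rw [Fin.val_natCast]; exact Nat.mod_eq_of_lt hj)
  have ha0 : a 0 = 1 := by rw [hadef]; simpa using hg0
  have haK : a K = n := by
    rw [hadef]; simp only
    rw [hcast K hKlt]
    have : (⟨K, hKlt⟩ : Fin n) = k := Fin.ext rfl
    rw [this, hgk]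
  have hIcc : ∀ i : Fin n, 1 ≤ g i ∧ g i ≤ n := by
    intro i
    have := hg.mapsTo (Set.mem_univ i)
    rw [Set.mem_Icc, Fintype.card_fin] at this
    exact this
  have ha1 : a 1 < n := by
    have h1 : a 1 = g 1 := by rw [hadef]; norm_num
    have hle := (hIcc 1).2
    rcases Nat.eq_or_lt_of_le hle with he | hlt
    · exfalso
      have : g 1 = g k := by rw [hgk, he]
      have h1k : (1 : Fin n) = k := labeling_injOn hg this
      have : (1 : Fin n).val = K := by rw [h1k]
      omega
    · omega
  have haK1 : 2 ≤ a (K + 1) := by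
    have hlt : K + 1 < n := by omega
    have h1 : a (K + 1) = g ⟨K + 1, hlt⟩ := by rw [hadef]; simp only; rw [hcast (K + 1) hlt]
    have hge := (hIcc ⟨K + 1, hlt⟩).1
    rcases Nat.eq_or_lt_of_le hge with he | hlt2
    · exfalso
      have : g ⟨K + 1, hlt⟩ = g 0 := by rw [hg0, ← he]
      have h1k : (⟨K + 1, hlt⟩ : Fin n) = 0 := labeling_injOn hg this
      have : (⟨K + 1, hlt⟩ : Fin n).val = 0 := by rw [h1k]; rfl
      simp at this
    · rw [h1]; omega
  have hb : ∀ j ≤ n, b j = if 1 ≤ j ∧ j ≤ K then a (K + 1 - j) else a j := by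
    intro j hj
    by_cases hc : 1 ≤ j ∧ j ≤ K
    · rw [if_pos hc]
      have hjlt : j < n := by omega
      simp only [hbdef, hhdef, hadef]
      rw [hcast j hjlt, hcast (K + 1 - j) (by omega)]
      have hσj : σ ⟨j, hjlt⟩ = ⟨K + 1 - j, by omega⟩ := by
        simp only [hσdef]
        rw [dif_pos (show 1 ≤ j ∧ j ≤ K from hc)]
      rw [hσj]
    · rw [if_neg hc]
      rcases Nat.eq_or_lt_of_le hj with he | hjlt
      · subst he
        simp only [hbdef, hhdef, hadef]
        rw [Fin.natCast_self]
        have hσ0 : σ 0 = 0 := by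
          simp only [hσdef]
          rw [dif_neg (by simp)]
        rw [hσ0]
      · simp only [hbdef, hhdef, hadef]
        rw [hcast j hjlt]
        have hσj : σ ⟨j, hjlt⟩ = ⟨j, hjlt⟩ := by
          simp only [hσdef]
          rw [dif_neg (show ¬(1 ≤ j ∧ j ≤ K) from hc)]
        rw [hσj]
  exact sum_reverse_lt n K hK1 hK2 a b hb ha0 haK ha1 haK1

/-- For every `θ ≥ 3`, there is a labeling `f` of the cycle `C_θ`
achieving `M(f) = M(C_θ)` and such that the vertex labeled `1` and the vertex labeled
`θ` are adjacent. -/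
theorem statement12 (θ : ℕ) (hθ : 3 ≤ θ) :
    ∃ f : Fin θ → ℕ, IsLabeling (Fin θ) f ∧
      prodSum (SimpleGraph.cycleGraph θ) f = minPS (SimpleGraph.cycleGraph θ) ∧
      ∃ u v : Fin θ, f u = 1 ∧ f v = θ ∧ (SimpleGraph.cycleGraph θ).Adj u v := by
  haveI : NeZero θ := ⟨by omega⟩
  set S : Set ℕ := {m | ∃ f : Fin θ → ℕ,
    IsLabeling (Fin θ) f ∧ prodSum (SimpleGraph.cycleGraph θ) f = m} with hS
  have hminPS : minPS (SimpleGraph.cycleGraph θ) = sInf S := rfl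
  have hf0 : IsLabeling (Fin θ) (fun i : Fin θ => i.val + 1) := by
    refine ⟨?_, ?_, ?_⟩
    · intro i _
      simp only [Set.mem_Icc, Fintype.card_fin]
      have := i.isLt
      omega
    · intro x _ y _ h
      simp only at h
      exact Fin.ext (by omega)
    · intro y hy
      rw [Set.mem_Icc, Fintype.card_fin] at hy
      exact ⟨⟨y - 1, by omega⟩, Set.mem_univ _, by simp only; omega⟩
  have hne : S.Nonempty := ⟨_, ⟨_, hf0, rfl⟩⟩
  obtain ⟨f, hf, hfm⟩ := Nat.sInf_mem hne
  have h1mem : (1 : ℕ) ∈ Set.Icc 1 (Fintype.card (Fin θ)) := by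
    rw [Fintype.card_fin]; exact ⟨le_refl 1, by omega⟩
  obtain ⟨u, -, hu⟩ := hf.surjOn h1mem
  have hθmem : θ ∈ Set.Icc 1 (Fintype.card (Fin θ)) := by
    rw [Fintype.card_fin]; exact ⟨by omega, le_refl θ⟩
  obtain ⟨v, -, hv⟩ := hf.surjOn hθmem
  by_cases hadj : (SimpleGraph.cycleGraph θ).Adj u v
  · exact ⟨f, hf, by rw [hfm, hminPS], u, v, hu, hv, hadj⟩
  · exfalso
    obtain ⟨h, hh, hlt⟩ := improve θ hθ f hf u v hu hv hadj
    have hle : sInf S ≤ prodSum (SimpleGraph.cycleGraph θ) h := Nat.sInf_le ⟨h, hh, rfl⟩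
    omega
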